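/- Let G be an abelian group and (G_i)_{i∈δ} an increasing chain (indexed by a linear order δ) of subgroups with G = ⋃_{i∈δ} G_i, such that G_i is a pure subgroup of G_j whenever i ≤ j, and each G_i is a torsion-free finitely Butler group. Then G is a torsion-free finitely Butler group, and each G_i is a pure subgroup of G. -/

import Mathlib

/-- `H` is a pure subgroup: `nG ∩ H = nH` for every `n : ℕ`. -/
def AddSubgroup.IsPure {G : Type*} [AddCommGroup G] (H : AddSubgroup G) : Prop :=
  ∀ (n : ℕ), ∀ h ∈ H, (∃ g : G, n • g = h) → ∃ h' ∈ H, n • h' = h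

/-- `H` is a pure subgroup of `K` (both regarded as subgroups of an ambient group):
`H ≤ K` and `nK ∩ H = nH` for every `n : ℕ`. -/
def IsPureIn {G : Type*} [AddCommGroup G] (H K : AddSubgroup G) : Prop :=
  H ≤ K ∧ ∀ (n : ℕ), ∀ h ∈ H, (∃ g ∈ K, n • g = h) → ∃ h' ∈ H, n • h' = h

/-- A Butler group: a torsion-free abelian group of finite rank admitting a pure embedding
into a finite direct sum of rank-one torsion-free groups (nonzero subgroups of `ℚ`). -/
def IsButler (B : Type*) [AddCommGroup B] : Prop :=
  NoZeroSMulDivisors ℤ B ∧ Module.rank ℤ B < Cardinal.aleph0 ∧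
    ∃ (k : ℕ) (A : Fin k → AddSubgroup ℚ), (∀ i, A i ≠ ⊥) ∧
      ∃ f : B →+ (∀ i : Fin k, ↥(A i)), Function.Injective f ∧ f.range.IsPure

/-- A torsion-free finitely Butler (B₀-) group: a torsion-free abelian group all of whose
finite-rank pure subgroups are Butler groups. -/
def IsFinitelyButler (B : Type*) [AddCommGroup B] : Prop :=
  NoZeroSMulDivisors ℤ B ∧
    ∀ H : AddSubgroup B, H.IsPure → Module.rank ℤ ↥H < Cardinal.aleph0 → IsButler ↥H

lemma exists_nsmul_mem_of_rank_le {G : Type*} [AddCommGroup G] {K L : AddSubgroup G}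
    (hKL : K ≤ L) (hfin : Module.rank ℤ ↥L < Cardinal.aleph0)
    (hr : Module.rank ℤ ↥L ≤ Module.rank ℤ ↥K) {x : G} (hx : x ∈ L) :
    ∃ n : ℕ, 0 < n ∧ (n : ℤ) • x ∈ K := by
  by_contra hcon
  push_neg at hcon
  set m : ℕ := (Module.rank ℤ ↥L).toNat with hm
  have hcast : (m : Cardinal) = Module.rank ℤ ↥L := Cardinal.cast_toNat_of_lt_aleph0 hfin
  have hmK : (m : Cardinal) ≤ Module.rank ℤ ↥K := hcast ▸ hr
  obtain ⟨v, hv⟩ := exists_linearIndependent_of_le_rank hmK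
  -- map into G
  have hv' : LinearIndependent ℤ (fun i : Fin m => ((v i : ↥K) : G)) := by
    have hinj : Function.Injective K.subtype.toIntLinearMap := Subtype.val_injective
    exact hv.map' K.subtype.toIntLinearMap (LinearMap.ker_eq_bot.mpr hinj)
  set u : Fin (m + 1) → G := Fin.cons x (fun i => ((v i : ↥K) : G)) with hu
  have hui : LinearIndependent ℤ u := by
    rw [Fintype.linearIndependent_iff]
    intro g hg
    rw [Fin.sum_univ_succ] at hg
    simp only [hu, Fin.cons_zero, Fin.cons_succ] at hg
    have hS : (∑ i : Fin m, g i.succ • ((v i : ↥K) : G)) ∈ K :=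
      AddSubgroup.sum_mem _ fun i _ => K.zsmul_mem (v i).2 _
    have h0 : g 0 = 0 := by
      by_contra hg0
      have hxK : g 0 • x ∈ K := by
        have : g 0 • x = -(∑ i : Fin m, g i.succ • ((v i : ↥K) : G)) :=
          eq_neg_of_add_eq_zero_left hg
        rw [this]; exact K.neg_mem hS
      have hnpos : 0 < (g 0).natAbs := Int.natAbs_pos.mpr hg0
      rcases Int.natAbs_eq (g 0) with he | he
      · exact hcon _ hnpos (by rw [← he]; exact hxK)
      · refine hcon _ hnpos ?_
        have : ((g 0).natAbs : ℤ) • x = -(g 0 • x) := by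
          rw [← neg_smul]; congr 1; omega
        rw [this]; exact K.neg_mem hxK
    rw [h0, zero_smul, zero_add] at hg
    have := Fintype.linearIndependent_iff.mp hv' (fun i => g i.succ) hg
    intro i
    induction i using Fin.cases with
    | zero => exact h0
    | succ i => exact this i
  -- all values of u lie in L
  set w : Fin (m + 1) → ↥L := fun i => ⟨u i, by
    induction i using Fin.cases with
    | zero => simpa [hu] using hx
    | succ i => simpa [hu] using hKL (v i).2⟩ with hw
  have hwi : LinearIndependent ℤ w := by
    apply LinearIndependent.of_comp L.subtype.toIntLinearMap
    convert hui using 1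
    funext i; rfl
  have hle : ((m + 1 : ℕ) : Cardinal) ≤ Module.rank ℤ ↥L := natCast_le_rank_iff.mpr ⟨w, hwi⟩
  rw [← hcast] at hle
  exact absurd (Nat.cast_le.mp hle) (by omega)

lemma IsButler.of_addEquiv {B C : Type u} [AddCommGroup B] [AddCommGroup C]
    (e : B ≃+ C) (h : IsButler B) : IsButler C := by
  obtain ⟨h1, h2, k, A, hA, f, hf, hp⟩ := h
  refine ⟨?_, ?_, k, A, hA, f.comp e.symm.toAddMonoidHom, ?_, ?_⟩
  · haveI := h1
    constructor
    intro a x hax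
    have : a • e.symm x = 0 := by
      rw [← map_zsmul e.symm, hax, map_zero]
    rcases smul_eq_zero.mp this with h | h
    · exact Or.inl h
    · exact Or.inr (by simpa using congrArg e h)
  · have hre : Module.rank ℤ C = Module.rank ℤ B :=
      LinearEquiv.rank_eq (e.symm.toIntLinearEquiv : C ≃ₗ[ℤ] B)
    exact hre.trans_lt h2
  · exact hf.comp e.symm.injective
  · have hr : (f.comp e.symm.toAddMonoidHom).range = f.range := by
      ext y
      simp only [AddMonoidHom.mem_range, AddMonoidHom.comp_apply]
      constructor
      · rintro ⟨c, hc⟩; exact ⟨e.symm c, hc⟩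
      · rintro ⟨b, hb⟩; exact ⟨e b, by simpa using hb⟩
    exact hr ▸ hp

/-- The union of an increasing chain of torsion-free finitely Butler groups, each pure in
the later ones, is a torsion-free finitely Butler group, and each member of the chain is
pure in the union. -/
theorem isFinitelyButler_of_union_of_chain
    {G : Type*} [AddCommGroup G] {δ : Type*} [LinearOrder δ]
    (Gc : δ → AddSubgroup G)
    (hchain : ∀ i j, i ≤ j → IsPureIn (Gc i) (Gc j))
    (hunion : ∀ g : G, ∃ i, g ∈ Gc i)
    (hB : ∀ i, IsFinitelyButler ↥(Gc i)) :
    IsFinitelyButler G ∧ ∀ i, (Gc i).IsPure := by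
  -- torsion-freeness of G
  have htf : NoZeroSMulDivisors ℤ G := by
    constructor
    intro a x hax
    obtain ⟨i, hi⟩ := hunion x
    haveI := (hB i).1
    have h2 : a • (⟨x, hi⟩ : ↥(Gc i)) = 0 := Subtype.ext (by simpa using hax)
    rcases smul_eq_zero.mp h2 with h | h
    · exact Or.inl h
    · exact Or.inr (congrArg Subtype.val h)
  -- purity of each member of the chain in G
  have hpure : ∀ i, (Gc i).IsPure := by
    rintro i n h hh ⟨g, hg⟩
    obtain ⟨j, hj⟩ := hunion g
    rcases le_total i j with hij | hji
    · exact (hchain i j hij).2 n h hh ⟨g, hj, hg⟩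
    · exact ⟨g, (hchain j i hji).1 hj, hg⟩
  refine ⟨⟨htf, ?_⟩, hpure⟩
  intro H hHpure hHrank
  -- purity in G of the intersections H ⊓ Gc i
  have hKpure : ∀ i, (H ⊓ Gc i).IsPure := by
    rintro i n h hh ⟨g, hg⟩
    rcases Nat.eq_zero_or_pos n with rfl | hn
    · exact ⟨0, zero_mem _, by simpa using hg⟩
    obtain ⟨h1, hh1, he1⟩ := hHpure n h hh.1 ⟨g, hg⟩
    obtain ⟨h2, hh2, he2⟩ := hpure i n h hh.2 ⟨g, hg⟩
    have : h1 = h2 := by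
      have hne : (n : ℤ) ≠ 0 := by exact_mod_cast hn.ne'
      apply smul_right_injective G hne
      simpa [natCast_zsmul] using he1.trans he2.symm
    exact ⟨h1, ⟨hh1, this ▸ hh2⟩, he1⟩
  -- rank bound for intersections
  have hKrank : ∀ i, Module.rank ℤ ↥(H ⊓ Gc i) ≤ Module.rank ℤ ↥H := fun i =>
    LinearMap.rank_le_of_injective (AddSubgroup.inclusion inf_le_left).toIntLinearMap
      (fun a b hab => AddSubgroup.inclusion_injective inf_le_left (by exact_mod_cast hab))
  -- find an index where the rank is maximal
  set r : δ → ℕ := fun i => (Module.rank ℤ ↥(H ⊓ Gc i)).toNat with hrdef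
  have hne : (Set.range r).Nonempty := by
    obtain ⟨i, _⟩ := hunion 0
    exact ⟨r i, i, rfl⟩
  have hbdd : BddAbove (Set.range r) := by
    refine ⟨(Module.rank ℤ ↥H).toNat, ?_⟩
    rintro _ ⟨i, rfl⟩
    exact Cardinal.toNat_le_toNat (hKrank i) hHrank
  obtain ⟨i₀, hi₀⟩ := Nat.sSup_mem hne hbdd
  -- H is contained in Gc i₀
  have hsub : H ≤ Gc i₀ := by
    intro x hxH
    obtain ⟨j, hj⟩ := hunion x
    rcases le_total j i₀ with h1 | h1
    · exact (hchain j i₀ h1).1 hj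
    · have hle : H ⊓ Gc i₀ ≤ H ⊓ Gc j := inf_le_inf_left H (hchain i₀ j h1).1
      have hfin : Module.rank ℤ ↥(H ⊓ Gc j) < Cardinal.aleph0 :=
        lt_of_le_of_lt (hKrank j) hHrank
      have hfin₀ : Module.rank ℤ ↥(H ⊓ Gc i₀) < Cardinal.aleph0 :=
        lt_of_le_of_lt (hKrank i₀) hHrank
      have hrle : Module.rank ℤ ↥(H ⊓ Gc j) ≤ Module.rank ℤ ↥(H ⊓ Gc i₀) := by
        rw [← Cardinal.toNat_le_iff_le_of_lt_aleph0 hfin hfin₀]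
        show r j ≤ r i₀
        rw [hi₀]
        exact le_csSup hbdd ⟨j, rfl⟩
      obtain ⟨n, hn, hnx⟩ := exists_nsmul_mem_of_rank_le hle hfin hrle
        (show x ∈ H ⊓ Gc j from ⟨hxH, hj⟩)
      rw [natCast_zsmul] at hnx
      obtain ⟨h', hh', he⟩ := hKpure i₀ n (n • x) hnx ⟨x, rfl⟩
      have : h' = x := by
        have hne2 : (n : ℤ) ≠ 0 := by exact_mod_cast hn.ne'
        apply smul_right_injective G hne2
        simpa [natCast_zsmul] using he
      exact this ▸ hh'.2
  -- transfer to a pure subgroup of Gc i₀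
  set H' : AddSubgroup ↥(Gc i₀) := H.addSubgroupOf (Gc i₀) with hH'
  have e : ↥H' ≃+ ↥H := AddSubgroup.addSubgroupOfEquivOfLe hsub
  have hrank' : Module.rank ℤ ↥H' = Module.rank ℤ ↥H := e.toIntLinearEquiv.rank_eq
  have hpure' : H'.IsPure := by
    rintro n h hh ⟨g, hg⟩
    have hg' : n • (g : G) = (h : G) := by
      rw [← hg]; simp
    obtain ⟨h', hh', he⟩ := hHpure n (h : G) hh ⟨g, hg'⟩
    refine ⟨⟨h', hsub hh'⟩, ?_, ?_⟩
    · exact hh'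
    · exact Subtype.ext (by simpa using he)
  exact IsButler.of_addEquiv e ((hB i₀).2 H' hpure' (hrank' ▸ hHrank))
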